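/- Let κ be an uncountable cardinal and let {X_α : α < κ} be a family of nonempty topological spaces. If there is an uncountable set D ⊆ κ such that X_α is not sequentially compact for every α ∈ D, then the product space ∏_{α<κ} X_α (with the product topology) is SHD. -/
import Mathlib


open Filter Topology Set

/-- `x : ℕ → X` has no convergent subsequence. -/
def NoConvSubseq {X : Type*} [TopologicalSpace X] (x : ℕ → X) : Prop :=
  ∀ φ : ℕ → ℕ, StrictMono φ → ∀ y : X, ¬ Filter.Tendsto (x ∘ φ) Filter.atTop (nhds y)

/-- Selectively highly divergent. -/
def SHD (X : Type*) [TopologicalSpace X] : Prop :=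
  ∀ U : ℕ → Set X, (∀ n, IsOpen (U n)) → (∀ n, (U n).Nonempty) →
    ∃ x : ℕ → X, (∀ n, x n ∈ U n) ∧ NoConvSubseq x

/-- Weakly selectively highly divergent. -/
def WSHD (X : Type*) [TopologicalSpace X] : Prop :=
  ∀ U : ℕ → Set X, (∀ n, IsOpen (U n)) → (∀ n, (U n).Nonempty) →
    ∃ A : Set ℕ, A.Infinite ∧ ∃ x : ℕ → X, (∀ n ∈ A, x n ∈ U n) ∧
      ∀ φ : ℕ → ℕ, StrictMono φ → (∀ n, φ n ∈ A) →
        ∀ y : X, ¬ Filter.Tendsto (x ∘ φ) Filter.atTop (nhds y)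

/-- A sequence of nonempty open sets converges to a point. -/
def OpenSeqTendsto {X : Type*} [TopologicalSpace X] (U : ℕ → Set X) (x : X) : Prop :=
  ∀ V : Set X, IsOpen V → x ∈ V → ∃ m : ℕ, ∀ n ≥ m, U n ⊆ V

/-- Openly highly divergent: no sequence of nonempty open sets converges to a point. -/
def OHD (X : Type*) [TopologicalSpace X] : Prop :=
  ¬ ∃ (U : ℕ → Set X) (x : X),
      (∀ n, IsOpen (U n)) ∧ (∀ n, (U n).Nonempty) ∧ OpenSeqTendsto U x

/-- `x` has a countable local (neighbourhood) base. -/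
def HasCountableLocalBase {X : Type*} [TopologicalSpace X] (x : X) : Prop :=
  ∃ B : Set (Set X), B.Countable ∧ (∀ V ∈ B, IsOpen V ∧ x ∈ V) ∧
    ∀ U : Set X, IsOpen U → x ∈ U → ∃ V ∈ B, V ⊆ U

/-- `x` has a countable local π-base. -/
def HasCountableLocalPiBase {X : Type*} [TopologicalSpace X] (x : X) : Prop :=
  ∃ B : Set (Set X), B.Countable ∧ (∀ V ∈ B, IsOpen V ∧ V.Nonempty) ∧
    ∀ U : Set X, IsOpen U → x ∈ U → ∃ V ∈ B, V ⊆ U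

/-- UC: every point has uncountable character. -/
def UC (X : Type*) [TopologicalSpace X] : Prop := ∀ x : X, ¬ HasCountableLocalBase x

/-- π-UC: every point has uncountable π-character. -/
def PiUC (X : Type*) [TopologicalSpace X] : Prop := ∀ x : X, ¬ HasCountableLocalPiBase x

/-- Sequentially discrete: every convergent sequence is eventually constant. -/
def SD (X : Type*) [TopologicalSpace X] : Prop :=
  ∀ (x : ℕ → X) (y : X), Filter.Tendsto x Filter.atTop (nhds y) →
    ∃ m : ℕ, ∀ n ≥ m, x n = x m

/-- The Pixley–Roy hyperspace: nonempty finite subsets of `X`. -/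
def PR (X : Type*) : Type _ := {F : Set X // F.Finite ∧ F.Nonempty}

/-- The basic sets `[F, U]` of the Pixley–Roy topology. -/
def PRBasic {X : Type*} (F U : Set X) : Set (PR X) :=
  {G : PR X | F ⊆ G.1 ∧ G.1 ⊆ U}

instance PR.instTopologicalSpace {X : Type*} [TopologicalSpace X] :
    TopologicalSpace (PR X) :=
  TopologicalSpace.generateFrom
    {S | ∃ (F : PR X) (U : Set X), IsOpen U ∧ S = PRBasic F.1 U}

/-- P-space: countable intersections of open sets are open. -/
def PSpace (X : Type*) [TopologicalSpace X] : Prop :=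
  ∀ U : ℕ → Set X, (∀ n, IsOpen (U n)) → IsOpen (⋂ n, U n)

/-- `Σ(Y, p, κ)`: points of `Y^κ` differing from the constant `p` on countably many coordinates. -/
def SigmaProd (Y : Type*) (p : Y) (κ : Type*) : Set (κ → Y) :=
  {x | {α : κ | x α ≠ p}.Countable}

/-- `σ(Y, p, κ)`: points of `Y^κ` differing from the constant `p` on finitely many coordinates. -/
def SmallSigmaProd (Y : Type*) (p : Y) (κ : Type*) : Set (κ → Y) :=
  {x | {α : κ | x α ≠ p}.Finite}

theorem statement0 {ι : Type*} [Uncountable ι] (X : ι → Type*)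
    [∀ α, TopologicalSpace (X α)] [∀ α, Nonempty (X α)]
    (D : Set ι) (hD : ¬ D.Countable)
    (h : ∀ α ∈ D, ¬ SeqCompactSpace (X α)) :
    SHD (∀ α, X α) := by
  classical
  intro U hUo hUne
  choose p hp using hUne
  choose I u hu hsub using fun n => isOpen_pi_iff.mp (hUo n) (p n) (hp n)
  -- pick α ∈ D outside all I n
  have hcnt : (⋃ n, (I n : Set ι)).Countable :=
    Set.countable_iUnion fun n => (I n).countable_toSet
  have : ¬ D ⊆ ⋃ n, (I n : Set ι) := fun hs => hD (hcnt.mono hs)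
  obtain ⟨α, hαD, hαI⟩ := Set.not_subset.mp this
  -- get a divergent sequence in X α
  have hsc : ¬ IsSeqCompact (Set.univ : Set (X α)) := fun hh => h α hαD ⟨hh⟩
  rw [IsSeqCompact] at hsc
  push_neg at hsc
  obtain ⟨a, -, ha⟩ := hsc
  refine ⟨fun n => Function.update (p n) α (a n), ?_, ?_⟩
  · intro n
    apply hsub n
    intro i hi
    have hiα : i ≠ α := by
      rintro rfl
      exact hαI (Set.mem_iUnion.mpr ⟨n, hi⟩)
    show Function.update (p n) α (a n) i ∈ u n i
    rw [Function.update_of_ne hiα]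
    exact (hu n i hi).2
  · intro φ hφ y hT
    have hcoord : Filter.Tendsto (fun k => a (φ k)) Filter.atTop (nhds (y α)) := by
      have := ((continuous_apply α).tendsto y).comp hT
      simpa only [Function.comp_def, Function.update_self] using this
    exact ha (y α) (Set.mem_univ _) φ hφ hcoord
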